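/- Let N ≥ 1 be an integer and 0 < λ ≤ Λ. There exists exactly one function w : [0, ∞) → ℝ with w ∈ C¹([0, ∞)) ∩ C²((0, ∞)) such that w(0) = 1, w'(0) = 0, and w''(r) = M(−((N−1)/r)·m(w'(r)) − w(r)) for all r > 0 (global existence and uniqueness of the solution to this initial value problem). -/

import Mathlib

noncomputable def Mfun (lam Lam s : ℝ) : ℝ := if 0 < s then s / Lam else s / lam
noncomputable def mfun (lam Lam s : ℝ) : ℝ := if 0 < s then Lam * s else lam * s

noncomputable def D1 (u : ℝ → ℝ) : ℝ → ℝ := derivWithin u (Set.Icc 0 1)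
noncomputable def D2 (u : ℝ → ℝ) : ℝ → ℝ := derivWithin (D1 u) (Set.Ioc 0 1)

/-- A (possibly trivial) solution of the radial eigenvalue problem on the unit ball. -/
def RadialEigen (N : ℕ) (lam Lam μ : ℝ) (v : ℝ → ℝ) : Prop :=
  ContDiffOn ℝ 1 v (Set.Icc 0 1) ∧ ContDiffOn ℝ 2 v (Set.Ioc 0 1) ∧
  (∀ r ∈ Set.Ioc (0:ℝ) 1,
    D2 v r = Mfun lam Lam (-(((N:ℝ) - 1) / r) * mfun lam Lam (D1 v r) - μ * v r)) ∧
  D1 v 0 = 0 ∧ v 1 = 0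

def RadialIVPSol (N : ℕ) (lam Lam : ℝ) (w : ℝ → ℝ) : Prop :=
  ContDiffOn ℝ 1 w (Set.Ici 0) ∧ ContDiffOn ℝ 2 w (Set.Ioi 0) ∧
  w 0 = 1 ∧ derivWithin w (Set.Ici 0) 0 = 0 ∧
  ∀ r ∈ Set.Ioi (0:ℝ),
    deriv (deriv w) r = Mfun lam Lam (-(((N:ℝ) - 1) / r) * mfun lam Lam (deriv w r) - w r)

open Set intervalIntegral

section basic
variable {lam Lam : ℝ}

lemma Mfun_zero : Mfun lam Lam 0 = 0 := by simp [Mfun]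

lemma mfun_zero : mfun lam Lam 0 = 0 := by simp [mfun]

variable (hlam : 0 < lam) (hlL : lam ≤ Lam)

include hlam hlL

lemma Mfun_mono {a b : ℝ} (hab : a ≤ b) : Mfun lam Lam a ≤ Mfun lam Lam b := by
  have hL : 0 < Lam := lt_of_lt_of_le hlam hlL
  unfold Mfun
  split_ifs with h1 h2 h2
  · rw [div_le_div_iff₀ hL hL]; nlinarith
  · linarith
  · rw [div_le_div_iff₀ hlam hL]; nlinarith [not_lt.1 h1]
  · rw [div_le_div_iff₀ hlam hlam]; nlinarith

lemma Mfun_sub_le {a b : ℝ} (hab : a ≤ b) :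
    Mfun lam Lam b - Mfun lam Lam a ≤ (b - a) / lam := by
  have hL : 0 < Lam := lt_of_lt_of_le hlam hlL
  unfold Mfun
  split_ifs with h1 h2 h2
  · rw [div_sub_div_same, div_le_div_iff₀ hL hlam]
    nlinarith
  · rw [sub_le_iff_le_add, ← add_div, div_le_div_iff₀ hL hlam]
    nlinarith
  · linarith
  · rw [div_sub_div_same]

lemma Mfun_abs_le (s : ℝ) : |Mfun lam Lam s| ≤ |s| / lam := by
  have hL : 0 < Lam := lt_of_lt_of_le hlam hlL
  unfold Mfun
  split_ifs with h1
  · rw [abs_of_pos (div_pos h1 hL), abs_of_pos h1, div_le_div_iff₀ hL hlam]; nlinarith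
  · rw [abs_div, abs_of_pos hlam]

lemma Mfun_lip (a b : ℝ) : |Mfun lam Lam a - Mfun lam Lam b| ≤ |a - b| / lam := by
  rcases le_total b a with h | h
  · rw [abs_of_nonneg (sub_nonneg.2 (Mfun_mono hlam hlL h)), abs_of_nonneg (sub_nonneg.2 h)]
    exact Mfun_sub_le hlam hlL h
  · rw [abs_sub_comm, abs_sub_comm a b,
      abs_of_nonneg (sub_nonneg.2 (Mfun_mono hlam hlL h)), abs_of_nonneg (sub_nonneg.2 h)]
    exact Mfun_sub_le hlam hlL h

lemma mfun_mono {a b : ℝ} (hab : a ≤ b) : mfun lam Lam a ≤ mfun lam Lam b := by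
  have hL : 0 < Lam := lt_of_lt_of_le hlam hlL
  unfold mfun
  split_ifs with h1 h2 h2
  · nlinarith
  · nlinarith [not_lt.1 h2]
  · nlinarith
  · nlinarith

lemma mfun_nonneg {s : ℝ} (hs : 0 ≤ s) : 0 ≤ mfun lam Lam s := by
  have := mfun_mono hlam hlL hs
  rwa [mfun_zero] at this

lemma mfun_abs_le (s : ℝ) : |mfun lam Lam s| ≤ Lam * |s| := by
  have hL : 0 < Lam := lt_of_lt_of_le hlam hlL
  unfold mfun
  split_ifs with h1
  · rw [abs_mul, abs_of_pos hL]
  · rw [abs_mul, abs_of_pos hlam]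
    nlinarith [abs_nonneg s]

lemma mfun_lip (a b : ℝ) : |mfun lam Lam a - mfun lam Lam b| ≤ Lam * |a - b| := by
  have hL : 0 < Lam := lt_of_lt_of_le hlam hlL
  unfold mfun
  split_ifs with h1 h2 h2
  · rw [← mul_sub, abs_mul, abs_of_pos hL]
  · rw [abs_le]; constructor <;> nlinarith [not_lt.1 h2, abs_nonneg (a-b), le_abs_self (a-b), neg_abs_le (a-b)]
  · rw [abs_le]; constructor <;> nlinarith [not_lt.1 h1, abs_nonneg (a-b), le_abs_self (a-b), neg_abs_le (a-b)]
  · rw [← mul_sub, abs_mul, abs_of_pos hlam]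
    nlinarith [abs_nonneg (a-b)]

end basic

lemma Mfun_continuous {lam Lam : ℝ} : Continuous (Mfun lam Lam) := by
  have : Mfun lam Lam = fun s => if s ≤ 0 then s / lam else s / Lam := by
    funext s
    unfold Mfun
    rcases lt_or_ge 0 s with h | h
    · rw [if_pos h, if_neg (by linarith)]
    · rw [if_neg (not_lt.2 h), if_pos h]
  rw [this]
  exact Continuous.if_le (continuous_id.div_const lam) (continuous_id.div_const Lam)
    continuous_id continuous_const (by intro x hx; simp [hx])

lemma mfun_continuous {lam Lam : ℝ} : Continuous (mfun lam Lam) := by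
  have : mfun lam Lam = fun s => if s ≤ 0 then lam * s else Lam * s := by
    funext s
    unfold mfun
    rcases lt_or_ge 0 s with h | h
    · rw [if_pos h, if_neg (by linarith)]
    · rw [if_neg (not_lt.2 h), if_pos h]
  rw [this]
  exact Continuous.if_le (continuous_const.mul continuous_id) (continuous_const.mul continuous_id)
    continuous_id continuous_const (by intro x hx; simp [hx])

lemma div_mono' {a b c : ℝ} (h : a ≤ b) (hc : 0 < c) : a / c ≤ b / c :=
  (div_le_div_iff_of_pos_right hc).mpr h

noncomputable def Ffun (N : ℕ) (lam Lam : ℝ) (w : ℝ → ℝ) (r p : ℝ) : ℝ :=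
  Mfun lam Lam (-(((N : ℝ) - 1) / r) * mfun lam Lam p - w r)

section Fprops
variable {N : ℕ} {lam Lam : ℝ} {w w₁ w₂ : ℝ → ℝ} {r p q : ℝ}
  (hN : 1 ≤ N) (hlam : 0 < lam) (hlL : lam ≤ Lam) (hr : 0 < r)

include hN hr in
lemma cN_div_nonneg : 0 ≤ ((N : ℝ) - 1) / r := by
  apply div_nonneg _ hr.le
  have : (1 : ℝ) ≤ (N : ℝ) := by exact_mod_cast hN
  linarith

include hN hlam hlL hr

lemma Ffun_anti (hpq : p ≤ q) : Ffun N lam Lam w r q ≤ Ffun N lam Lam w r p := by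
  apply Mfun_mono hlam hlL
  have h1 := mfun_mono hlam hlL hpq
  have hc := cN_div_nonneg (N := N) (r := r) hN hr
  have := mul_le_mul_of_nonneg_left h1 hc
  linarith

lemma Ffun_le_of_nonneg (hp : 0 ≤ p) : Ffun N lam Lam w r p ≤ |w r| / lam := by
  have h1 : Ffun N lam Lam w r p ≤ Mfun lam Lam (-(w r)) := by
    apply Mfun_mono hlam hlL
    nlinarith [cN_div_nonneg (N := N) (r := r) hN hr, mfun_nonneg hlam hlL hp]
  calc Ffun N lam Lam w r p ≤ Mfun lam Lam (-(w r)) := h1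
    _ ≤ |Mfun lam Lam (-(w r))| := le_abs_self _
    _ ≤ |(-(w r))| / lam := Mfun_abs_le hlam hlL _
    _ = |w r| / lam := by rw [abs_neg]

lemma Ffun_ge_of_nonpos (hp : p ≤ 0) : -(|w r| / lam) ≤ Ffun N lam Lam w r p := by
  have hmp : mfun lam Lam p ≤ 0 := by
    have := mfun_mono hlam hlL hp; rwa [mfun_zero] at this
  have h1 : Mfun lam Lam (-(w r)) ≤ Ffun N lam Lam w r p := by
    apply Mfun_mono hlam hlL
    nlinarith [cN_div_nonneg (N := N) (r := r) hN hr]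
  calc -(|w r| / lam) = -(|(-(w r))| / lam) := by rw [abs_neg]
    _ ≤ -|Mfun lam Lam (-(w r))| := neg_le_neg (Mfun_abs_le hlam hlL _)
    _ ≤ Mfun lam Lam (-(w r)) := neg_abs_le _
    _ ≤ Ffun N lam Lam w r p := h1

/-- Key monotonicity estimate: if `q ≤ p` then
`F w₁ r p - F w₂ r q ≤ |w₁ r - w₂ r| / lam`. -/
lemma Ffun_sub_le (hqp : q ≤ p) :
    Ffun N lam Lam w₁ r p - Ffun N lam Lam w₂ r q ≤ |w₁ r - w₂ r| / lam := by
  set a₁ := -(((N : ℝ) - 1) / r) * mfun lam Lam p - w₁ r with ha₁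
  set a₂ := -(((N : ℝ) - 1) / r) * mfun lam Lam q - w₂ r with ha₂
  have harg : a₁ ≤ a₂ + |w₁ r - w₂ r| := by
    have h1 := mfun_mono hlam hlL hqp
    have hc := cN_div_nonneg (N := N) (r := r) hN hr
    have habs := le_abs_self (w₂ r - w₁ r)
    have hm := mul_le_mul_of_nonneg_left h1 hc
    rw [abs_sub_comm]
    simp only [ha₁, ha₂]
    linarith
  calc Ffun N lam Lam w₁ r p - Ffun N lam Lam w₂ r q
      ≤ Mfun lam Lam (a₂ + |w₁ r - w₂ r|) - Mfun lam Lam a₂ :=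
        sub_le_sub_right (Mfun_mono hlam hlL harg) _
    _ ≤ (a₂ + |w₁ r - w₂ r| - a₂) / lam := Mfun_sub_le hlam hlL (by nlinarith [abs_nonneg (w₁ r - w₂ r)])
    _ = |w₁ r - w₂ r| / lam := by ring_nf

lemma Ffun_lip : |Ffun N lam Lam w r p - Ffun N lam Lam w r q| ≤
    (((N : ℝ) - 1) / r) * Lam * |p - q| / lam := by
  have h1 := Mfun_lip hlam hlL (-(((N : ℝ) - 1) / r) * mfun lam Lam p - w r)
    (-(((N : ℝ) - 1) / r) * mfun lam Lam q - w r)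
  have h2 : |(-(((N : ℝ) - 1) / r) * mfun lam Lam p - w r) -
      (-(((N : ℝ) - 1) / r) * mfun lam Lam q - w r)| ≤ (((N : ℝ) - 1) / r) * (Lam * |p - q|) := by
    have h3 := mfun_lip hlam hlL p q
    have hc := cN_div_nonneg (N := N) (r := r) hN hr
    have heq : (-(((N : ℝ) - 1) / r) * mfun lam Lam p - w r) -
        (-(((N : ℝ) - 1) / r) * mfun lam Lam q - w r)
        = (((N : ℝ) - 1) / r) * (mfun lam Lam q - mfun lam Lam p) := by ring
    rw [heq, abs_mul, abs_of_nonneg hc, abs_sub_comm]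
    exact mul_le_mul_of_nonneg_left h3 hc
  calc |Ffun N lam Lam w r p - Ffun N lam Lam w r q| ≤ _ := h1
    _ ≤ (((N : ℝ) - 1) / r) * (Lam * |p - q|) / lam := (div_le_div_iff_of_pos_right hlam).mpr h2
    _ = (((N : ℝ) - 1) / r) * Lam * |p - q| / lam := by ring

lemma Ffun_bound : |Ffun N lam Lam w r p| ≤
    ((((N : ℝ) - 1) / r) * Lam * |p| + |w r|) / lam := by
  have h1 := Mfun_abs_le hlam hlL (-(((N : ℝ) - 1) / r) * mfun lam Lam p - w r)
  have hc := cN_div_nonneg (N := N) (r := r) hN hr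
  have h2 : |(-(((N : ℝ) - 1) / r) * mfun lam Lam p - w r)| ≤
      (((N : ℝ) - 1) / r) * Lam * |p| + |w r| := by
    have h3 := mfun_abs_le hlam hlL p
    calc |(-(((N : ℝ) - 1) / r) * mfun lam Lam p - w r)|
        ≤ |(-(((N : ℝ) - 1) / r) * mfun lam Lam p)| + |w r| := abs_sub _ _
      _ = (((N : ℝ) - 1) / r) * |mfun lam Lam p| + |w r| := by
          rw [abs_mul, abs_neg, abs_of_nonneg hc]
      _ ≤ (((N : ℝ) - 1) / r) * Lam * |p| + |w r| := by
          have hm := mul_le_mul_of_nonneg_left h3 hc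
          have : (((N : ℝ) - 1) / r) * (Lam * |p|) = (((N : ℝ) - 1) / r) * Lam * |p| := by ring
          linarith
  exact h1.trans ((div_le_div_iff_of_pos_right hlam).mpr h2)

end Fprops

lemma Ffun_continuousOn {N : ℕ} {lam Lam : ℝ} {w p : ℝ → ℝ} {S : Set ℝ}
    (hw : Continuous w) (hp : ContinuousOn p S) (hS : ∀ x ∈ S, x ≠ (0:ℝ)) :
    ContinuousOn (fun r => Ffun N lam Lam w r (p r)) S := by
  apply Mfun_continuous.comp_continuousOn
  apply ContinuousOn.sub _ hw.continuousOn
  apply ContinuousOn.mul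
  · apply ContinuousOn.neg
    exact continuousOn_const.div continuousOn_id hS
  · exact mfun_continuous.comp_continuousOn hp

/-- FTC-1 for globally continuous integrands. -/
lemma hasDerivAt_primitive_of_continuous {g : ℝ → ℝ} (hg : Continuous g) (a : ℝ) (t : ℝ) :
    HasDerivAt (fun u => ∫ s in a..u, g s) (g t) t :=
  intervalIntegral.integral_hasDerivAt_right (hg.intervalIntegrable _ _)
    (hg.stronglyMeasurableAtFilter _ _) hg.continuousAt

/-- Sign comparison lemma: if `q a ≤ 0` and wherever `q > 0` its derivative
is at most `g`, then `q r ≤ ∫ a..r, g`. -/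
lemma sign_le {q g : ℝ → ℝ} {a b : ℝ}
    (hq : ContinuousOn q (Set.Icc a b)) (hqa : q a ≤ 0)
    (hg : Continuous g) (hg0 : ∀ s, 0 ≤ g s)
    (hd : ∀ s ∈ Set.Ioo a b, 0 < q s → ∃ y, HasDerivAt q y s ∧ y ≤ g s) :
    ∀ r ∈ Set.Icc a b, q r ≤ ∫ s in a..r, g s := by
  intro r hr
  by_contra hcon
  push_neg at hcon
  set G : ℝ → ℝ := fun t => ∫ s in a..t, g s with hGdef
  have hGd : ∀ t, HasDerivAt G (g t) t := hasDerivAt_primitive_of_continuous hg a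
  have hGc : Continuous G := by
    rw [continuous_iff_continuousAt]; exact fun t => (hGd t).continuousAt
  have hG0 : ∀ t, a ≤ t → 0 ≤ G t := fun t ht =>
    intervalIntegral.integral_nonneg ht (fun u _ => hg0 u)
  set ψ : ℝ → ℝ := fun t => q t - G t with hψdef
  have har : a ≤ r := hr.1
  have hrb : r ≤ b := hr.2
  have hψc : ContinuousOn ψ (Set.Icc a r) :=
    (hq.mono (Set.Icc_subset_Icc le_rfl hrb)).sub hGc.continuousOn
  have hψa : ψ a ≤ 0 := by
    simp only [hψdef, hGdef]
    rw [intervalIntegral.integral_same]; linarith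
  have hψr : 0 < ψ r := by simp only [hψdef, hGdef]; linarith
  set S := {t ∈ Set.Icc a r | ψ t ≤ 0} with hSdef
  have hSne : S.Nonempty := ⟨a, Set.left_mem_Icc.2 har, hψa⟩
  have hSclosed : IsClosed S := hψc.preimage_isClosed_of_isClosed isClosed_Icc isClosed_Iic
  have hScomp : IsCompact S := isCompact_Icc.of_isClosed_subset hSclosed (fun t ht => ht.1)
  set c := sSup S with hcdef
  have hcS : c ∈ S := hScomp.sSup_mem hSne
  have hac : a ≤ c := hcS.1.1
  have hcr : c < r := lt_of_le_of_ne hcS.1.2 (fun h => by rw [h] at hcS; linarith [hcS.2])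
  have hgt : ∀ t, c < t → t ≤ r → 0 < ψ t := by
    intro t hct htr
    by_contra hle
    push_neg at hle
    have : t ∈ S := ⟨⟨hac.trans hct.le, htr⟩, hle⟩
    exact absurd (le_csSup hScomp.bddAbove this) (not_le.2 hct)
  have hqpos : ∀ t, c < t → t ≤ r → 0 < q t := by
    intro t hct htr
    have h1 := hgt t hct htr
    have h2 := hG0 t (hac.trans hct.le)
    simp only [hψdef] at h1; linarith
  have hanti : AntitoneOn ψ (Set.Icc c r) := by
    apply antitoneOn_of_deriv_nonpos (convex_Icc c r)
      (hψc.mono (Set.Icc_subset_Icc hac le_rfl))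
    · intro x hx
      rw [interior_Icc] at hx
      obtain ⟨y, hy, -⟩ := hd x ⟨lt_of_le_of_lt hac hx.1, lt_of_lt_of_le hx.2 hrb⟩
        (hqpos x hx.1 hx.2.le)
      exact ((hy.sub (hGd x)).differentiableAt).differentiableWithinAt
    · intro x hx
      rw [interior_Icc] at hx
      obtain ⟨y, hy, hyg⟩ := hd x ⟨lt_of_le_of_lt hac hx.1, lt_of_lt_of_le hx.2 hrb⟩
        (hqpos x hx.1 hx.2.le)
      rw [show deriv ψ x = y - g x from (hy.sub (hGd x)).deriv]
      linarith
  have := hanti (Set.left_mem_Icc.2 hcr.le) (Set.right_mem_Icc.2 hcr.le) hcr.le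
  linarith [hcS.2]

/-- Two-sided version. -/
lemma sign_abs_le {q g : ℝ → ℝ} {a b : ℝ}
    (hq : ContinuousOn q (Set.Icc a b)) (hqa : q a = 0)
    (hg : Continuous g) (hg0 : ∀ s, 0 ≤ g s)
    (hd : ∀ s ∈ Set.Ioo a b, ∃ y, HasDerivAt q y s ∧ (0 < q s → y ≤ g s) ∧ (q s < 0 → -g s ≤ y)) :
    ∀ r ∈ Set.Icc a b, |q r| ≤ ∫ s in a..r, g s := by
  intro r hr
  have h1 : q r ≤ ∫ s in a..r, g s := by
    apply sign_le hq (le_of_eq hqa) hg hg0 _ r hr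
    intro s hs hqs
    obtain ⟨y, hy, h2, h3⟩ := hd s hs
    exact ⟨y, hy, h2 hqs⟩
  have h2 : -q r ≤ ∫ s in a..r, g s := by
    apply sign_le (q := fun t => -q t) hq.neg (by simp [hqa]) hg hg0 _ r hr
    intro s hs hqs
    obtain ⟨y, hy, h2, h3⟩ := hd s hs
    exact ⟨-y, hy.neg, by simpa using neg_le_neg (h3 (by linarith))⟩
  rw [abs_le]
  constructor <;> linarith

section epssol

variable {N : ℕ} {lam Lam : ℝ} {w : ℝ → ℝ}

/-- clamp to [-B, B] -/
noncomputable def clampB (B x : ℝ) : ℝ := max (-B) (min x B)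

lemma clampB_eq {B x : ℝ} (h : |x| ≤ B) : clampB B x = x := by
  rw [abs_le] at h
  unfold clampB
  rw [min_eq_left h.2, max_eq_right h.1]

lemma clampB_nonneg {B x : ℝ} (hB : 0 < B) (hx : 0 < x) : 0 ≤ clampB B x :=
  le_trans (le_min hx.le hB.le) (le_max_right _ _)

lemma clampB_nonpos {B x : ℝ} (hB : 0 < B) (hx : x ≤ 0) : clampB B x ≤ 0 := by
  unfold clampB
  rw [min_eq_left (hx.trans hB.le)]
  exact max_le (by linarith) hx

lemma clampB_lip (B x y : ℝ) : |clampB B x - clampB B y| ≤ |x - y| := by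
  unfold clampB
  calc |max (-B) (min x B) - max (-B) (min y B)| ≤ |min x B - min y B| := by
        rw [max_comm (-B) _, max_comm (-B) _]; exact abs_max_sub_max_le_abs _ _ _
    _ ≤ |x - y| := by
        have := abs_min_sub_min_le_max x B y B
        simpa using this

lemma eps_sol (hN : 1 ≤ N) (hlam : 0 < lam) (hlL : lam ≤ Lam) (hw : Continuous w)
    {eps T : ℝ} (heps : 0 < eps) (hT : eps ≤ T) :
    ∃ f : ℝ → ℝ, f eps = 0 ∧ ContinuousOn f (Set.Icc eps T) ∧
      (∀ t ∈ Set.Ioo eps T, HasDerivAt f (Ffun N lam Lam w t (f t)) t) ∧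
      (∀ t ∈ Set.Icc eps T, |f t| ≤ (∫ s in eps..t, |w s|) / lam) := by
  have hLam : 0 < Lam := lt_of_lt_of_le hlam hlL
  set B : ℝ := (∫ s in (0:ℝ)..T, |w s|) / lam + 1 with hBdef
  have hint0 : (0:ℝ) ≤ ∫ s in (0:ℝ)..T, |w s| :=
    intervalIntegral.integral_nonneg (by linarith) (fun u _ => abs_nonneg _)
  have hB : 0 < B := by positivity
  set v : ℝ → ℝ → ℝ := fun t x => Ffun N lam Lam w t (clampB B x) with hvdef
  obtain ⟨Mw, hMw⟩ := isCompact_Icc.exists_bound_of_continuousOn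
    (s := Set.Icc eps T) hw.continuousOn
  have hMw' : ∀ t ∈ Set.Icc eps T, |w t| ≤ Mw := by
    intro t ht; rw [← Real.norm_eq_abs]; exact hMw t ht
  have hMw0 : 0 ≤ Mw := le_trans (abs_nonneg _) (hMw' eps ⟨le_rfl, hT⟩)
  have hc0 := cN_div_nonneg (N := N) (r := eps) hN heps
  set C : ℝ := ((((N:ℝ)-1)/eps) * Lam * B + Mw) / lam with hCdef
  have hC0 : 0 ≤ C := by positivity
  set Lre : ℝ := (((N:ℝ)-1)/eps) * Lam / lam with hLdef
  have hLre : 0 ≤ Lre := by positivity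
  set R : ℝ := C * (T - eps) + 1 with hRdef
  have hct : ∀ t, eps ≤ t → ((N:ℝ)-1)/t ≤ ((N:ℝ)-1)/eps := by
    intro t ht
    apply div_le_div_of_nonneg_left _ heps ht
    have : (1:ℝ) ≤ (N:ℝ) := by exact_mod_cast hN
    linarith
  have hpl : IsPicardLindelof v (tmin := eps) (tmax := T) ⟨eps, le_rfl, hT⟩ 0 R.toNNReal 0
      C.toNNReal Lre.toNNReal := by
    constructor
    · intro t ht
      apply LipschitzOnWith.of_dist_le_mul
      intro x _ y _
      rw [Real.dist_eq, Real.dist_eq, Real.coe_toNNReal _ hLre]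
      have h1 := Ffun_lip (N := N) (w := w) hN hlam hlL (lt_of_lt_of_le heps ht.1)
        (p := clampB B x) (q := clampB B y)
      have h2 := clampB_lip B x y
      have h3 : (((N:ℝ)-1)/t) * Lam * |clampB B x - clampB B y| / lam ≤
          Lre * |x - y| := by
        rw [hLdef]
        have hc0t := cN_div_nonneg (N := N) (r := t) hN (lt_of_lt_of_le heps ht.1)
        have h4 := hct t ht.1
        have h5 : (((N:ℝ)-1)/t) * Lam * |clampB B x - clampB B y| ≤
            (((N:ℝ)-1)/eps) * Lam * |x - y| := by
          apply mul_le_mul (by nlinarith) h2 (abs_nonneg _) (by positivity)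
        calc (((N:ℝ)-1)/t) * Lam * |clampB B x - clampB B y| / lam
            ≤ ((((N:ℝ)-1)/eps) * Lam * |x - y|) / lam := (div_le_div_iff_of_pos_right hlam).mpr h5
          _ = (((N:ℝ)-1)/eps) * Lam / lam * |x - y| := by ring
      exact h1.trans h3
    · intro x _
      apply Mfun_continuous.comp_continuousOn
      apply ContinuousOn.sub _ hw.continuousOn
      apply ContinuousOn.mul
      · apply ContinuousOn.neg
        exact continuousOn_const.div continuousOn_id
          (fun t ht => ne_of_gt (lt_of_lt_of_le heps ht.1))
      · exact continuousOn_const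
    · intro t ht x _
      rw [Real.norm_eq_abs, Real.coe_toNNReal _ hC0]
      have h1 := Ffun_bound (N := N) (w := w) hN hlam hlL (lt_of_lt_of_le heps ht.1)
        (p := clampB B x)
      have h2 : |clampB B x| ≤ B := by
        unfold clampB
        rw [abs_le]
        constructor
        · exact le_max_left _ _
        · exact max_le (by linarith) (min_le_right _ _)
      have hc0t := cN_div_nonneg (N := N) (r := t) hN (lt_of_lt_of_le heps ht.1)
      have h4 := hct t ht.1
      have h5 : (((N:ℝ)-1)/t) * Lam * |clampB B x| + |w t| ≤
          (((N:ℝ)-1)/eps) * Lam * B + Mw := by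
        have hw5 := hMw' t ht
        have h6 : (((N:ℝ)-1)/t) * Lam * |clampB B x| ≤ (((N:ℝ)-1)/eps) * Lam * B :=
          mul_le_mul (mul_le_mul_of_nonneg_right h4 hLam.le) h2 (abs_nonneg _) (by positivity)
        linarith
      exact h1.trans (((div_le_div_iff_of_pos_right hlam).mpr h5).trans_eq rfl)
    · have hR0 : 0 ≤ R := by have := mul_nonneg hC0 (sub_nonneg.2 hT); linarith
      show (C.toNNReal : ℝ) * max (T - eps) (eps - eps) ≤ (R.toNNReal : ℝ) - ((0 : NNReal) : ℝ)
      rw [NNReal.coe_zero, sub_zero, Real.coe_toNNReal _ hC0, Real.coe_toNNReal _ hR0]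
      rw [hRdef]
      have : max (T - eps) (eps - eps) = T - eps := by
        rw [max_eq_left]; linarith
      rw [this]
      linarith
  obtain ⟨f, hf0, hfd⟩ := hpl.exists_eq_forall_mem_Icc_hasDerivWithinAt₀
  have hfc : ContinuousOn f (Set.Icc eps T) := fun t ht => (hfd t ht).continuousWithinAt
  -- derivative at interior points (still the clamped field)
  have hfd' : ∀ t ∈ Set.Ioo eps T, HasDerivAt f (v t (f t)) t := by
    intro t ht
    exact (hfd t ⟨ht.1.le, ht.2.le⟩).hasDerivAt (Icc_mem_nhds ht.1 ht.2)
  -- a priori bound via the sign lemma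
  have hbd : ∀ t ∈ Set.Icc eps T, |f t| ≤ (∫ s in eps..t, |w s|) / lam := by
    intro t ht
    have h := sign_abs_le (q := f) (g := fun s => |w s| / lam) (a := eps) (b := T)
      hfc hf0 ((hw.abs).div_const lam) (fun s => by positivity) ?_ t ht
    · calc |f t| ≤ ∫ s in eps..t, |w s| / lam := h
        _ = (∫ s in eps..t, |w s|) / lam := intervalIntegral.integral_div _ _
    · intro s hs
      refine ⟨v s (f s), hfd' s hs, fun hpos => ?_, fun hneg => ?_⟩
      · exact Ffun_le_of_nonneg hN hlam hlL (lt_of_lt_of_le heps hs.1.le)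
          (clampB_nonneg hB hpos)
      · exact Ffun_ge_of_nonpos hN hlam hlL (lt_of_lt_of_le heps hs.1.le)
          (clampB_nonpos hB hneg.le)
  -- the bound shows the clamp is inactive
  have hsmall : ∀ t ∈ Set.Icc eps T, |f t| ≤ B := by
    intro t ht
    have h1 := hbd t ht
    have h2 : (∫ s in eps..t, |w s|) ≤ ∫ s in (0:ℝ)..T, |w s| := by
      apply intervalIntegral.integral_mono_interval (by linarith : (0:ℝ) ≤ eps) ht.1 ht.2
      · filter_upwards with s using abs_nonneg _
      · exact (hw.abs).intervalIntegrable _ _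
    have h3 : (∫ s in eps..t, |w s|) / lam ≤ (∫ s in (0:ℝ)..T, |w s|) / lam :=
      (div_le_div_iff_of_pos_right hlam).mpr h2
    rw [hBdef]; linarith
  refine ⟨f, hf0, hfc, ?_, hbd⟩
  intro t ht
  have h := hfd' t ht
  have heq : v t (f t) = Ffun N lam Lam w t (f t) := by
    rw [show v t (f t) = Ffun N lam Lam w t (clampB B (f t)) from rfl,
      clampB_eq (hsmall t ⟨ht.1.le, ht.2.le⟩)]
  rwa [heq] at h

end epssol

def InnerSol (N : ℕ) (lam Lam : ℝ) (w p : ℝ → ℝ) : Prop :=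
  Continuous p ∧ (∀ t, t ≤ 0 → p t = 0) ∧
  (∀ t, 0 < t → HasDerivAt p (Ffun N lam Lam w t (p t)) t) ∧
  (∀ t, 0 ≤ t → |p t| ≤ (∫ s in (0:ℝ)..t, |w s|) / lam)

section inner

variable {N : ℕ} {lam Lam : ℝ} {w : ℝ → ℝ}

open Filter Topology

lemma inner_exists (hN : 1 ≤ N) (hlam : 0 < lam) (hlL : lam ≤ Lam) (hw : Continuous w) :
    ∃ p : ℝ → ℝ, InnerSol N lam Lam w p := by
  classical
  -- the approximating parameters
  set e : ℕ → ℝ := fun n => 1 / ((n : ℝ) + 1) with hedef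
  set Tn : ℕ → ℝ := fun n => (n : ℝ) + 1 with hTdef
  have he : ∀ n, 0 < e n := fun n => by positivity
  have he1 : ∀ n, e n ≤ 1 := fun n => by
    rw [hedef]; dsimp only; rw [div_le_one (by positivity)]
    linarith [Nat.cast_nonneg (α := ℝ) n]
  have hT1 : ∀ n, 1 ≤ Tn n := fun n => by
    rw [hTdef]; dsimp only; linarith [Nat.cast_nonneg (α := ℝ) n]
  have heT : ∀ n, e n ≤ Tn n := fun n => (he1 n).trans (hT1 n)
  have hemono : ∀ n m : ℕ, n ≤ m → e m ≤ e n := by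
    intro n m hnm
    apply one_div_le_one_div_of_le (by positivity)
    have : (n:ℝ) ≤ (m:ℝ) := by exact_mod_cast hnm
    linarith
  have hTmono : ∀ n m : ℕ, n ≤ m → Tn n ≤ Tn m := by
    intro n m hnm
    have : (n:ℝ) ≤ (m:ℝ) := by exact_mod_cast hnm
    rw [hTdef]; dsimp only; linarith
  -- the approximating solutions
  have hex : ∀ n : ℕ, ∃ f : ℝ → ℝ, f (e n) = 0 ∧ ContinuousOn f (Set.Icc (e n) (Tn n)) ∧
      (∀ t ∈ Set.Ioo (e n) (Tn n), HasDerivAt f (Ffun N lam Lam w t (f t)) t) ∧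
      (∀ t ∈ Set.Icc (e n) (Tn n), |f t| ≤ (∫ s in (e n)..t, |w s|) / lam) :=
    fun n => eps_sol hN hlam hlL hw (he n) (heT n)
  set f : ℕ → ℝ → ℝ := fun n => (hex n).choose with hfdef
  have hf0 : ∀ n, f n (e n) = 0 := fun n => (hex n).choose_spec.1
  have hfc : ∀ n, ContinuousOn (f n) (Set.Icc (e n) (Tn n)) := fun n => (hex n).choose_spec.2.1
  have hfd : ∀ n, ∀ t ∈ Set.Ioo (e n) (Tn n),
      HasDerivAt (f n) (Ffun N lam Lam w t (f n t)) t := fun n => (hex n).choose_spec.2.2.1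
  have hfb : ∀ n, ∀ t ∈ Set.Icc (e n) (Tn n),
      |f n t| ≤ (∫ s in (e n)..t, |w s|) / lam := fun n => (hex n).choose_spec.2.2.2
  -- globally defined versions
  set g : ℕ → ℝ → ℝ := fun n t => f n (min (max t (e n)) (Tn n)) with hgdef
  have hmem : ∀ (n : ℕ) (t : ℝ), min (max t (e n)) (Tn n) ∈ Set.Icc (e n) (Tn n) := fun n t =>
    ⟨le_min (le_max_right _ _) (heT n), min_le_right _ _⟩
  have hgc : ∀ n, Continuous (g n) := by
    intro n
    apply (hfc n).comp_continuous ((continuous_id.max continuous_const).min continuous_const)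
    exact fun t => hmem n t
  have hg_eq : ∀ n, ∀ t ∈ Set.Icc (e n) (Tn n), g n t = f n t := by
    intro n t ht
    rw [hgdef]; dsimp only
    rw [max_eq_left ht.1, min_eq_left ht.2]
  have hg_zero : ∀ (n : ℕ) (t : ℝ), t ≤ e n → g n t = 0 := by
    intro n t ht
    rw [hgdef]; dsimp only
    rw [max_eq_right ht, min_eq_left (heT n), hf0]
  -- the error bound
  set η : ℕ → ℝ := fun n => (∫ s in (0:ℝ)..(e n), |w s|) / lam with hηdef
  have hη0 : ∀ n, 0 ≤ η n := by
    intro n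
    have h1 : (0:ℝ) ≤ ∫ s in (0:ℝ)..(e n), |w s| :=
      intervalIntegral.integral_nonneg (he n).le (fun u _ => abs_nonneg _)
    rw [hηdef]; positivity
  have hsub : ∀ {a b c d : ℝ}, c ≤ a → a ≤ b → b ≤ d →
      (∫ s in a..b, |w s|) ≤ ∫ s in c..d, |w s| := by
    intro a b c d h1 h2 h3
    apply intervalIntegral.integral_mono_interval h1 h2 h3
    · filter_upwards with s using abs_nonneg _
    · exact (hw.abs).intervalIntegrable _ _
  -- η tends to 0
  obtain ⟨M₁, hM₁⟩ := isCompact_Icc.exists_bound_of_continuousOn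
    (s := Set.Icc (0:ℝ) 1) hw.continuousOn
  have hM₁0 : 0 ≤ M₁ := le_trans (norm_nonneg _) (hM₁ 0 ⟨le_rfl, zero_le_one⟩)
  have hηle : ∀ n, η n ≤ M₁ * e n / lam := by
    intro n
    apply div_mono' _ hlam
    have h1 : ∀ x ∈ Set.uIoc (0:ℝ) (e n), ‖|w x|‖ ≤ M₁ := by
      intro x hx
      rw [Set.uIoc_of_le (he n).le] at hx
      rw [Real.norm_eq_abs, abs_abs, ← Real.norm_eq_abs]
      exact hM₁ x ⟨hx.1.le, hx.2.trans (he1 n)⟩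
    have h2 := intervalIntegral.norm_integral_le_of_norm_le_const h1
    rw [Real.norm_eq_abs] at h2
    calc (∫ s in (0:ℝ)..(e n), |w s|) ≤ abs (∫ s in (0:ℝ)..(e n), |w s|) := le_abs_self _
      _ ≤ M₁ * |e n - 0| := h2
      _ = M₁ * e n := by rw [sub_zero, abs_of_pos (he n)]
  have hηto0 : Tendsto η atTop (𝓝 0) := by
    apply squeeze_zero hη0 hηle
    have h1 : Tendsto (fun n : ℕ => 1 / ((n:ℝ) + 1)) atTop (𝓝 0) :=
      tendsto_one_div_add_atTop_nhds_zero_nat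
    have h2 := (h1.const_mul M₁).div_const lam
    rw [hedef]
    simpa using h2
  -- comparison between approximate solutions
  have hcomp : ∀ n m : ℕ, n ≤ m → ∀ t ∈ Set.Icc (e n) (Tn n), |f n t - f m t| ≤ η n := by
    intro n m hnm t ht
    have hIcc : Set.Icc (e n) (Tn n) ⊆ Set.Icc (e m) (Tn m) :=
      Set.Icc_subset_Icc (hemono n m hnm) (hTmono n m hnm)
    have hfmb : |f m (e n)| ≤ η n := by
      have h1 := hfb m (e n) ⟨hemono n m hnm, (he1 n).trans (hT1 m)⟩
      exact h1.trans (div_mono' (hsub (he m).le (hemono n m hnm) le_rfl) hlam)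
    have hfmb' := abs_le.1 hfmb
    have hderiv : ∀ s ∈ Set.Ioo (e n) (Tn n), HasDerivAt (fun t => f n t - f m t)
        (Ffun N lam Lam w s (f n s) - Ffun N lam Lam w s (f m s)) s := by
      intro s hs
      have hsm : s ∈ Set.Ioo (e m) (Tn m) :=
        ⟨lt_of_le_of_lt (hemono n m hnm) hs.1, lt_of_lt_of_le hs.2 (hTmono n m hnm)⟩
      exact (hfd n s hs).sub (hfd m s hsm)
    have hcont : ContinuousOn (fun t => f n t - f m t) (Set.Icc (e n) (Tn n)) :=
      (hfc n).sub ((hfc m).mono hIcc)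
    have hup : f n t - f m t ≤ η n := by
      have hs := sign_le (q := fun t => f n t - f m t - η n) (g := fun _ => (0:ℝ))
        (hcont.sub continuousOn_const)
        (by show f n (e n) - f m (e n) - η n ≤ 0; rw [hf0 n]; linarith [hfmb'.1])
        continuous_const (fun _ => le_rfl) ?_ t ht
      · have hs' : f n t - f m t - η n ≤ 0 := by simpa using hs
        linarith
      · intro s hs hpos
        refine ⟨Ffun N lam Lam w s (f n s) - Ffun N lam Lam w s (f m s),
          (hderiv s hs).sub_const _, ?_⟩
        have hle : f m s ≤ f n s := by linarith [hη0 n]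
        have := Ffun_anti (w := w) hN hlam hlL (lt_of_lt_of_le (he n) hs.1.le) hle
        show Ffun N lam Lam w s (f n s) - Ffun N lam Lam w s (f m s) ≤ 0
        linarith
    have hdn : f m t - f n t ≤ η n := by
      have hs := sign_le (q := fun t => f m t - f n t - η n) (g := fun _ => (0:ℝ))
        ((((hfc m).mono hIcc).sub (hfc n)).sub continuousOn_const)
        (by show f m (e n) - f n (e n) - η n ≤ 0; rw [hf0 n]; linarith [hfmb'.2])
        continuous_const (fun _ => le_rfl) ?_ t ht
      · have hs' : f m t - f n t - η n ≤ 0 := by simpa using hs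
        linarith
      · intro s hs hpos
        have hsm : s ∈ Set.Ioo (e m) (Tn m) :=
          ⟨lt_of_le_of_lt (hemono n m hnm) hs.1, lt_of_lt_of_le hs.2 (hTmono n m hnm)⟩
        refine ⟨Ffun N lam Lam w s (f m s) - Ffun N lam Lam w s (f n s),
          ((hfd m s hsm).sub (hfd n s hs)).sub_const _, ?_⟩
        have hle : f n s ≤ f m s := by linarith [hη0 n]
        have := Ffun_anti (w := w) hN hlam hlL (lt_of_lt_of_le (he n) hs.1.le) hle
        show Ffun N lam Lam w s (f m s) - Ffun N lam Lam w s (f n s) ≤ 0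
        linarith
    exact abs_sub_le_iff.2 ⟨hup, hdn⟩
  -- comparison for the global versions
  have hcompg : ∀ n m : ℕ, n ≤ m → ∀ t, t ≤ Tn n → |g n t - g m t| ≤ η n := by
    intro n m hnm t hle
    rcases le_or_gt t (e m) with h1 | h1
    · rw [hg_zero m t h1, hg_zero n t (h1.trans (hemono n m hnm))]
      simpa using hη0 n
    rcases le_or_gt t (e n) with h2 | h2
    · rw [hg_zero n t h2, hg_eq m t ⟨h1.le, hle.trans (hTmono n m hnm)⟩]
      rw [zero_sub, abs_neg]
      exact (hfb m t ⟨h1.le, hle.trans (hTmono n m hnm)⟩).trans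
        (div_mono' (hsub (he m).le h1.le h2) hlam)
    · rw [hg_eq n t ⟨h2.le, hle⟩, hg_eq m t (Set.Icc_subset_Icc (hemono n m hnm)
        (hTmono n m hnm) ⟨h2.le, hle⟩)]
      exact hcomp n m hnm t ⟨h2.le, hle⟩
  have hTnat : ∀ (k n : ℕ), k ≤ n → (k:ℝ) ≤ Tn n := by
    intro k n hkn
    have : (k:ℝ) ≤ (n:ℝ) := by exact_mod_cast hkn
    rw [hTdef]; dsimp only; linarith
  -- pointwise limit
  have hcauchy : ∀ t, CauchySeq (fun n => g n t) := by
    intro t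
    rw [Metric.cauchySeq_iff']
    intro ε hε
    obtain ⟨N₁, hN₁⟩ := (Metric.tendsto_atTop.1 hηto0) ε hε
    obtain ⟨N₂, hN₂⟩ := exists_nat_ge t
    refine ⟨max N₁ N₂, fun n hn => ?_⟩
    have htT : t ≤ Tn (max N₁ N₂) := hN₂.trans (hTnat N₂ _ (le_max_right _ _))
    have h1 := hcompg (max N₁ N₂) n hn t htT
    have h2 := hN₁ (max N₁ N₂) (le_max_left _ _)
    rw [Real.dist_eq, abs_sub_comm]
    rw [Real.dist_eq, sub_zero, abs_of_nonneg (hη0 _)] at h2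
    linarith
  have hlim : ∀ t, ∃ L, Tendsto (fun n => g n t) atTop (𝓝 L) :=
    fun t => cauchySeq_tendsto_of_complete (hcauchy t)
  set p : ℝ → ℝ := fun t => (hlim t).choose with hpdef
  have hp : ∀ t, Tendsto (fun n => g n t) atTop (𝓝 (p t)) := fun t => (hlim t).choose_spec
  -- uniform distance bound
  have hdist : ∀ (n : ℕ) (t : ℝ), t ≤ Tn n → |g n t - p t| ≤ η n := by
    intro n t ht
    have h1 : Tendsto (fun m => |g n t - g m t|) atTop (𝓝 |g n t - p t|) :=
      (tendsto_const_nhds.sub (hp t)).abs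
    apply le_of_tendsto h1
    filter_upwards [eventually_ge_atTop n] with m hm
    exact hcompg n m hm t ht
  -- p vanishes on nonpositives
  have hp0 : ∀ t, t ≤ 0 → p t = 0 := by
    intro t ht
    have h1 : (fun n => g n t) = fun _ => (0:ℝ) :=
      funext fun n => hg_zero n t (ht.trans (he n).le)
    have h2 := hp t
    rw [h1] at h2
    exact (tendsto_nhds_unique h2 tendsto_const_nhds)
  -- the integral bound for p
  have hpb : ∀ t, 0 ≤ t → |p t| ≤ (∫ s in (0:ℝ)..t, |w s|) / lam := by
    intro t ht
    obtain ⟨N₂, hN₂⟩ := exists_nat_ge t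
    have key : ∀ n, N₂ ≤ n → |p t| ≤ η n + (∫ s in (0:ℝ)..t, |w s|) / lam := by
      intro n hn
      have htT : t ≤ Tn n := hN₂.trans (hTnat N₂ n hn)
      have h1 := hdist n t htT
      have h2 : |g n t| ≤ (∫ s in (0:ℝ)..t, |w s|) / lam := by
        rcases le_or_gt t (e n) with h3 | h3
        · rw [hg_zero n t h3, abs_zero]
          have h4 : (0:ℝ) ≤ ∫ s in (0:ℝ)..t, |w s| :=
            intervalIntegral.integral_nonneg ht (fun u _ => abs_nonneg _)
          positivity
        · rw [hg_eq n t ⟨h3.le, htT⟩]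
          exact (hfb n t ⟨h3.le, htT⟩).trans (div_mono' (hsub (he n).le h3.le le_rfl) hlam)
      calc |p t| = |(p t - g n t) + g n t| := by ring_nf
        _ ≤ |p t - g n t| + |g n t| := abs_add_le _ _
        _ = |g n t - p t| + |g n t| := by rw [abs_sub_comm]
        _ ≤ η n + (∫ s in (0:ℝ)..t, |w s|) / lam := add_le_add h1 h2
    have h2 : Tendsto (fun n => η n + (∫ s in (0:ℝ)..t, |w s|) / lam) atTop
        (𝓝 ((∫ s in (0:ℝ)..t, |w s|) / lam)) := by
      simpa using hηto0.add (tendsto_const_nhds (x := (∫ s in (0:ℝ)..t, |w s|) / lam))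
    apply ge_of_tendsto h2
    filter_upwards [eventually_ge_atTop N₂] with n hn using key n hn
  -- continuity of p
  have hpc : Continuous p := by
    rw [continuous_iff_continuousAt]
    intro t₀
    obtain ⟨N₂, hN₂⟩ := exists_nat_ge (t₀ + 1)
    have hmem0 : Set.Iic (t₀ + 1) ∈ 𝓝 t₀ := Iic_mem_nhds (by linarith)
    have huniform : TendstoUniformlyOn (fun n t => g n t) p atTop (Set.Iic (t₀+1)) := by
      rw [Metric.tendstoUniformlyOn_iff]
      intro ε hε
      have hev1 : ∀ᶠ n in atTop, η n < ε := hηto0.eventually (gt_mem_nhds hε)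
      filter_upwards [hev1, eventually_ge_atTop N₂] with n h1 h2 x hx
      have hxT : x ≤ Tn n := le_trans hx (hN₂.trans (hTnat N₂ n h2))
      have := hdist n x hxT
      rw [Real.dist_eq, abs_sub_comm]
      linarith
    have hcont : ContinuousOn p (Set.Iic (t₀+1)) :=
      huniform.continuousOn (Frequently.of_forall fun n => (hgc n).continuousOn)
    exact hcont.continuousAt hmem0
  -- the ODE for p
  have hode : ∀ t, 0 < t → HasDerivAt p (Ffun N lam Lam w t (p t)) t := by
    intro t₀ ht₀
    set a : ℝ := t₀ / 2 with hadef
    set b : ℝ := t₀ + 1 with hbdef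
    have ha : 0 < a := by positivity
    have hab : a < t₀ := by rw [hadef]; linarith
    have htb : t₀ < b := by rw [hbdef]; linarith
    obtain ⟨N₃, hN₃⟩ := exists_nat_ge (max (1/a) b)
    have hN₃a : e N₃ < a := by
      have h1 : 1/a ≤ (N₃:ℝ) := le_trans (le_max_left _ _) hN₃
      rw [hedef]; dsimp only
      rw [div_lt_iff₀ (by positivity)]
      rw [div_le_iff₀ ha] at h1
      nlinarith
    have hN₃b : b < Tn N₃ := by
      have h1 : b ≤ (N₃:ℝ) := le_trans (le_max_right _ _) hN₃
      rw [hTdef]; dsimp only; linarith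
    have hsub2 : ∀ n, N₃ ≤ n → Set.Icc a b ⊆ Set.Ioo (e n) (Tn n) := by
      intro n hn x hx
      exact ⟨lt_of_le_of_lt (hemono N₃ n hn) (lt_of_lt_of_le hN₃a hx.1),
        lt_of_le_of_lt hx.2 (lt_of_lt_of_le hN₃b (hTmono N₃ n hn))⟩
    have hgd : ∀ n, N₃ ≤ n → ∀ s ∈ Set.Icc a b,
        HasDerivAt (g n) (Ffun N lam Lam w s (g n s)) s := by
      intro n hn s hs
      have hso := hsub2 n hn hs
      have h1 := hfd n s hso
      have h2 : g n =ᶠ[𝓝 s] f n := by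
        filter_upwards [Ioo_mem_nhds hso.1 hso.2] with x hx
        exact hg_eq n x ⟨hx.1.le, hx.2.le⟩
      rw [hg_eq n s ⟨hso.1.le, hso.2.le⟩]
      exact h1.congr_of_eventuallyEq h2
    have hintc : ∀ (q : ℝ → ℝ), Continuous q → ∀ t ∈ Set.Icc a b, IntervalIntegrable
        (fun s => Ffun N lam Lam w s (q s)) MeasureTheory.volume a t := by
      intro q hq t ht
      apply ContinuousOn.intervalIntegrable
      apply Ffun_continuousOn hw hq.continuousOn
      intro x hx
      rw [Set.uIcc_of_le ht.1] at hx
      exact ne_of_gt (lt_of_lt_of_le ha hx.1)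
    have hIE : ∀ n, N₃ ≤ n → ∀ t ∈ Set.Icc a b,
        g n t - g n a = ∫ s in a..t, Ffun N lam Lam w s (g n s) := by
      intro n hn t ht
      have h1 := intervalIntegral.integral_eq_sub_of_hasDerivAt
        (f := g n) (f' := fun s => Ffun N lam Lam w s (g n s)) ?_ (hintc (g n) (hgc n) t ht)
      · rw [h1]
      · intro x hx
        rw [Set.uIcc_of_le ht.1] at hx
        exact hgd n hn x ⟨hx.1, hx.2.trans ht.2⟩
    -- pass to the limit in the integral equation
    have hIElim : ∀ t ∈ Set.Icc a b, p t - p a = ∫ s in a..t, Ffun N lam Lam w s (p s) := by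
      intro t ht
      have hK0 := cN_div_nonneg (N := N) (r := a) hN ha
      set K : ℝ := (((N:ℝ)-1)/a) * Lam / lam with hKdef
      have hK : 0 ≤ K :=
        div_nonneg (mul_nonneg hK0 (lt_of_lt_of_le hlam hlL).le) hlam.le
      have hbound : ∀ n, N₃ ≤ n →
          |(∫ s in a..t, Ffun N lam Lam w s (g n s)) -
            ∫ s in a..t, Ffun N lam Lam w s (p s)| ≤ K * η n * (b - a) := by
        intro n hn
        rw [← intervalIntegral.integral_sub (hintc (g n) (hgc n) t ht) (hintc p hpc t ht)]
        have h1 : ∀ x ∈ Set.uIoc a t, ‖Ffun N lam Lam w x (g n x) -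
            Ffun N lam Lam w x (p x)‖ ≤ K * η n := by
          intro x hx
          rw [Set.uIoc_of_le ht.1] at hx
          have hx0 : 0 < x := lt_trans ha hx.1
          have h2 := Ffun_lip (N := N) (w := w) hN hlam hlL hx0 (p := g n x) (q := p x)
          have h3 : |g n x - p x| ≤ η n := hdist n x (hx.2.trans (ht.2.trans hN₃b.le)
            |>.trans (hTmono N₃ n hn))
          have h4 : ((N:ℝ)-1)/x ≤ ((N:ℝ)-1)/a := by
            apply div_le_div_of_nonneg_left _ ha hx.1.le
            have : (1:ℝ) ≤ (N:ℝ) := by exact_mod_cast hN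
            linarith
          rw [Real.norm_eq_abs]
          calc |Ffun N lam Lam w x (g n x) - Ffun N lam Lam w x (p x)|
              ≤ (((N:ℝ)-1)/x) * Lam * |g n x - p x| / lam := h2
            _ ≤ (((N:ℝ)-1)/a) * Lam * η n / lam := by
                apply div_mono' _ hlam
                apply mul_le_mul (mul_le_mul_of_nonneg_right h4 (lt_of_lt_of_le hlam hlL).le)
                  h3 (abs_nonneg _) (mul_nonneg hK0 (lt_of_lt_of_le hlam hlL).le)
            _ = K * η n := by rw [hKdef]; ring
        have h5 := intervalIntegral.norm_integral_le_of_norm_le_const h1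
        rw [Real.norm_eq_abs] at h5
        refine h5.trans ?_
        have h6 : |t - a| = t - a := abs_of_nonneg (by linarith [ht.1])
        have h7 : t - a ≤ b - a := by linarith [ht.2]
        have h8 : 0 ≤ K * η n := mul_nonneg hK (hη0 n)
        rw [h6]
        nlinarith
      have hlhs : Tendsto (fun n => g n t - g n a) atTop (𝓝 (p t - p a)) :=
        (hp t).sub (hp a)
      have hrhs : Tendsto (fun n => ∫ s in a..t, Ffun N lam Lam w s (g n s)) atTop
          (𝓝 (∫ s in a..t, Ffun N lam Lam w s (p s))) := by
        rw [tendsto_iff_dist_tendsto_zero]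
        apply squeeze_zero' (Eventually.of_forall fun n => dist_nonneg)
          (g := fun n => K * η n * (b - a)) ?_ ?_
        · filter_upwards [eventually_ge_atTop N₃] with n hn
          rw [Real.dist_eq]
          exact hbound n hn
        · have := (hηto0.const_mul K).mul_const (b - a)
          simpa using this
      have heq : ∀ᶠ n in atTop, g n t - g n a = ∫ s in a..t, Ffun N lam Lam w s (g n s) := by
        filter_upwards [eventually_ge_atTop N₃] with n hn using hIE n hn t ht
      exact tendsto_nhds_unique (hlhs.congr' heq) hrhs
    -- conclude via FTC
    have hFc : ContinuousOn (fun s => Ffun N lam Lam w s (p s)) (Set.Ioi 0) :=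
      Ffun_continuousOn hw hpc.continuousOn (fun x hx => ne_of_gt hx)
    have hΦd : HasDerivAt (fun u => p a + ∫ s in a..u, Ffun N lam Lam w s (p s))
        (Ffun N lam Lam w t₀ (p t₀)) t₀ := by
      apply HasDerivAt.const_add
      apply intervalIntegral.integral_hasDerivAt_right
      · exact hintc p hpc t₀ ⟨hab.le, htb.le⟩
      · exact hFc.stronglyMeasurableAtFilter isOpen_Ioi t₀ ht₀
      · exact hFc.continuousAt (Ioi_mem_nhds ht₀)
    have hpΦ : p =ᶠ[𝓝 t₀] fun u => p a + ∫ s in a..u, Ffun N lam Lam w s (p s) := by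
      filter_upwards [Ioo_mem_nhds hab htb] with x hx
      have := hIElim x ⟨hx.1.le, hx.2.le⟩
      linarith
    exact hΦd.congr_of_eventuallyEq hpΦ
  exact ⟨p, hpc, hp0, hode, hpb⟩

end inner

open Classical in
noncomputable def pfun (N : ℕ) (lam Lam : ℝ) (w : ℝ → ℝ) : ℝ → ℝ :=
  if h : 1 ≤ N ∧ 0 < lam ∧ lam ≤ Lam ∧ Continuous w then
    (inner_exists h.1 h.2.1 h.2.2.1 h.2.2.2).choose else fun _ => 0

lemma pfun_spec {N : ℕ} {lam Lam : ℝ} {w : ℝ → ℝ} (hN : 1 ≤ N) (hlam : 0 < lam)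
    (hlL : lam ≤ Lam) (hw : Continuous w) : InnerSol N lam Lam w (pfun N lam Lam w) := by
  rw [pfun]
  rw [dif_pos ⟨hN, hlam, hlL, hw⟩]
  exact (inner_exists hN hlam hlL hw).choose_spec

/-- The inner solution map is Lipschitz in `w` (and in particular unique). -/
lemma inner_lip {N : ℕ} {lam Lam : ℝ} (hN : 1 ≤ N) (hlam : 0 < lam) (hlL : lam ≤ Lam)
    {w₁ w₂ p₁ p₂ : ℝ → ℝ} (hw₁ : Continuous w₁) (hw₂ : Continuous w₂)
    (h₁ : InnerSol N lam Lam w₁ p₁) (h₂ : InnerSol N lam Lam w₂ p₂) :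
    ∀ t, 0 ≤ t → |p₁ t - p₂ t| ≤ (∫ s in (0:ℝ)..t, |w₁ s - w₂ s|) / lam := by
  intro t₀ ht₀
  obtain ⟨hc₁, hz₁, hd₁, -⟩ := h₁
  obtain ⟨hc₂, hz₂, hd₂, -⟩ := h₂
  have key := sign_abs_le (q := fun t => p₁ t - p₂ t) (g := fun s => |w₁ s - w₂ s| / lam)
    (a := 0) (b := t₀) ((hc₁.sub hc₂).continuousOn)
    (by show p₁ 0 - p₂ 0 = 0; rw [hz₁ 0 le_rfl, hz₂ 0 le_rfl]; ring)
    (((hw₁.sub hw₂).abs).div_const lam) (fun s => by positivity) ?_ t₀ ⟨ht₀, le_rfl⟩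
  · refine key.trans (le_of_eq ?_)
    exact intervalIntegral.integral_div _ _
  · intro s hs
    refine ⟨Ffun N lam Lam w₁ s (p₁ s) - Ffun N lam Lam w₂ s (p₂ s),
      (hd₁ s hs.1).sub (hd₂ s hs.1), fun hpos => ?_, fun hneg => ?_⟩
    · exact Ffun_sub_le hN hlam hlL hs.1 (by linarith)
    · have h3 := Ffun_sub_le (w₁ := w₂) (w₂ := w₁) hN hlam hlL hs.1
        (q := p₁ s) (p := p₂ s) (by linarith)
      rw [abs_sub_comm] at h3
      linarith

noncomputable def Wseq (N : ℕ) (lam Lam : ℝ) : ℕ → ℝ → ℝ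
  | 0 => fun _ => 1
  | n+1 => fun r => 1 + ∫ s in (0:ℝ)..r, pfun N lam Lam (Wseq N lam Lam n) s

section outer

open Filter Topology

variable {N : ℕ} {lam Lam : ℝ}

set_option maxHeartbeats 2000000 in
lemma exists_ivp (hN : 1 ≤ N) (hlam : 0 < lam) (hlL : lam ≤ Lam) :
    ∃ w : ℝ → ℝ, RadialIVPSol N lam Lam w := by
  classical
  have hLam : 0 < Lam := lt_of_lt_of_le hlam hlL
  set W : ℕ → ℝ → ℝ := Wseq N lam Lam with hWdef
  have hWsucc : ∀ n, W (n+1) = fun r => 1 + ∫ s in (0:ℝ)..r, pfun N lam Lam (W n) s :=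
    fun n => rfl
  have hWc : ∀ n, Continuous (W n) := by
    intro n
    induction n with
    | zero => exact continuous_const
    | succ n ih =>
      rw [hWsucc n]
      apply Continuous.add continuous_const
      rw [continuous_iff_continuousAt]
      exact fun t => (hasDerivAt_primitive_of_continuous
        (pfun_spec hN hlam hlL ih).1 0 t).continuousAt
  set P : ℕ → ℝ → ℝ := fun n => pfun N lam Lam (W n) with hPdef
  have hPs : ∀ n, InnerSol N lam Lam (W n) (P n) := fun n => pfun_spec hN hlam hlL (hWc n)
  have hint_zero : ∀ (q : ℝ → ℝ), (∀ t ≤ 0, q t = 0) → ∀ r ≤ (0:ℝ),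
      (∫ s in (0:ℝ)..r, q s) = 0 := by
    intro q hq r hr
    rw [intervalIntegral.integral_congr (g := fun _ => 0)]
    · simp
    · intro s hs
      rw [Set.uIcc_of_ge hr] at hs
      exact hq s hs.2
  have hW1 : ∀ n, ∀ r ≤ (0:ℝ), W n r = 1 := by
    intro n
    induction n with
    | zero => intro r _; rfl
    | succ n ih =>
      intro r hr
      rw [congrFun (hWsucc n) r]
      show 1 + ∫ s in (0:ℝ)..r, P n s = 1
      rw [hint_zero (P n) (hPs n).2.1 r hr, add_zero]
  -- the main inductive estimate
  have hD : ∀ b : ℝ, 0 ≤ b → ∀ n, ∀ r ∈ Set.Icc (0:ℝ) b,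
      |W (n+1) r - W n r| ≤ (b^2/lam) * (b/lam)^n * r^n / n.factorial := by
    intro b hb n
    induction n with
    | zero =>
      intro r hr
      have h1 : W 1 r - W 0 r = ∫ s in (0:ℝ)..r, P 0 s := by
        rw [congrFun (hWsucc 0) r]
        show 1 + _ - 1 = _
        ring
      have h2 : ∀ s ∈ Set.Icc (0:ℝ) r, |P 0 s| ≤ b / lam := by
        intro s hs
        have h3 := (hPs 0).2.2.2 s hs.1
        have h4 : (∫ u in (0:ℝ)..s, |W 0 u|) = s := by
          have : ∀ u, |W 0 u| = 1 := fun u => by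
            show |(1:ℝ)| = 1; simp
          simp only [this]
          simp
        rw [h4] at h3
        refine h3.trans (div_mono' (hs.2.trans hr.2) hlam)
      calc |W 1 r - W 0 r| = |∫ s in (0:ℝ)..r, P 0 s| := by rw [h1]
        _ ≤ ∫ s in (0:ℝ)..r, |P 0 s| := intervalIntegral.abs_integral_le_integral_abs hr.1
        _ ≤ ∫ s in (0:ℝ)..r, b / lam := by
            apply intervalIntegral.integral_mono_on hr.1
              (((hPs 0).1.abs).intervalIntegrable _ _)
              (intervalIntegrable_const) h2
        _ = (b / lam) * r := by
            rw [intervalIntegral.integral_const]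
            simp [smul_eq_mul]; ring
        _ ≤ (b^2/lam) * (b/lam)^0 * r^0 / (Nat.factorial 0) := by
            simp only [pow_zero, mul_one, Nat.factorial_zero, Nat.cast_one, div_one, pow_one]
            calc (b/lam) * r ≤ (b/lam) * b := by
                  apply mul_le_mul_of_nonneg_left (hr.2) (by positivity)
              _ = b^2/lam := by ring
    | succ n ih =>
      intro r hr
      have hfacpos : (0:ℝ) < n.factorial := by exact_mod_cast n.factorial_pos
      have hfacpos1 : (0:ℝ) < (n+1).factorial := by exact_mod_cast (n+1).factorial_pos
      have hfs : ((n+1).factorial : ℝ) = ((n:ℝ)+1) * n.factorial := by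
        rw [Nat.factorial_succ]; push_cast; ring
      have h1 : W (n+1+1) r - W (n+1) r = ∫ s in (0:ℝ)..r, (P (n+1) s - P n s) := by
        rw [congrFun (hWsucc (n+1)) r, congrFun (hWsucc n) r]
        show (1 + _) - (1 + _) = _
        rw [intervalIntegral.integral_sub ((hPs (n+1)).1.intervalIntegrable _ _)
          ((hPs n).1.intervalIntegrable _ _)]
        ring
      have h2 : ∀ s ∈ Set.Icc (0:ℝ) r,
          |P (n+1) s - P n s| ≤ (b^2/lam) * (b/lam)^(n+1) * s^n / (n+1).factorial := by
        intro s hs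
        have hsb : s ≤ b := hs.2.trans hr.2
        have h3 := inner_lip hN hlam hlL (hWc (n+1)) (hWc n) (hPs (n+1)) (hPs n) s hs.1
        have h4 : (∫ u in (0:ℝ)..s, |W (n+1) u - W n u|) ≤
            ∫ u in (0:ℝ)..s, (b^2/lam) * (b/lam)^n / n.factorial * u^n := by
          apply intervalIntegral.integral_mono_on hs.1
            ((((hWc (n+1)).sub (hWc n)).abs).intervalIntegrable _ _)
            (((continuous_const.mul (continuous_pow n))).intervalIntegrable _ _)
          intro u hu
          have := ih u ⟨hu.1, (hu.2.trans hsb)⟩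
          calc |W (n+1) u - W n u| ≤ (b^2/lam) * (b/lam)^n * u^n / n.factorial := this
            _ = (b^2/lam) * (b/lam)^n / n.factorial * u^n := by ring
        have h5 : (∫ u in (0:ℝ)..s, (b^2/lam) * (b/lam)^n / n.factorial * u^n) =
            (b^2/lam) * (b/lam)^n / n.factorial * (s^(n+1)/((n:ℝ)+1)) := by
          rw [intervalIntegral.integral_const_mul, integral_pow,
            zero_pow (Nat.succ_ne_zero n), sub_zero]
        have h6 : s^(n+1) ≤ b * s^n := by
          rw [pow_succ]
          calc s^n * s ≤ s^n * b := mul_le_mul_of_nonneg_left hsb (pow_nonneg hs.1 n)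
            _ = b * s^n := by ring
        refine h3.trans ?_
        rw [hfs]
        have h7 : (∫ u in (0:ℝ)..s, |W (n+1) u - W n u|) ≤
            (b^2/lam) * (b/lam)^n / n.factorial * (b * s^n /((n:ℝ)+1)) := by
          refine h4.trans ?_
          rw [h5]
          apply mul_le_mul_of_nonneg_left _ (by positivity)
          exact div_mono' h6 (by positivity)
        refine (div_mono' h7 hlam).trans_eq ?_
        have hn1 : ((n:ℝ)+1) ≠ 0 := by positivity
        rw [pow_succ]
        have hl0 : lam ≠ 0 := hlam.ne'
        field_simp
        ring_nf
        simp [hl0]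
      -- integrate
      have h8 : |W (n+1+1) r - W (n+1) r| ≤
          ∫ s in (0:ℝ)..r, (b^2/lam) * (b/lam)^(n+1) / (n+1).factorial * s^n := by
        rw [h1]
        refine (intervalIntegral.abs_integral_le_integral_abs hr.1).trans ?_
        apply intervalIntegral.integral_mono_on hr.1
          ((((hPs (n+1)).1.sub (hPs n).1).abs).intervalIntegrable _ _)
          (((continuous_const.mul (continuous_pow n))).intervalIntegrable _ _)
        intro s hs
        calc |P (n+1) s - P n s| ≤ (b^2/lam) * (b/lam)^(n+1) * s^n / (n+1).factorial :=
              h2 s hs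
          _ = (b^2/lam) * (b/lam)^(n+1) / (n+1).factorial * s^n := by ring
      have h9 : (∫ s in (0:ℝ)..r, (b^2/lam) * (b/lam)^(n+1) / (n+1).factorial * s^n) =
          (b^2/lam) * (b/lam)^(n+1) / (n+1).factorial * (r^(n+1)/((n:ℝ)+1)) := by
        rw [intervalIntegral.integral_const_mul, integral_pow,
          zero_pow (Nat.succ_ne_zero n), sub_zero]
      refine h8.trans ?_
      rw [h9]
      have hfacpos2 : (0:ℝ) < (n+1).factorial := hfacpos1
      have h10 : r^(n+1)/((n:ℝ)+1) ≤ r^(n+1) := by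
        apply div_le_self (pow_nonneg hr.1 _)
        push_cast; linarith [Nat.cast_nonneg (α := ℝ) n]
      calc (b^2/lam) * (b/lam)^(n+1) / (n+1).factorial * (r^(n+1)/((n:ℝ)+1))
          ≤ (b^2/lam) * (b/lam)^(n+1) / (n+1).factorial * r^(n+1) := by
            apply mul_le_mul_of_nonneg_left h10 (by positivity)
        _ = (b^2/lam) * (b/lam)^(n+1) * r^(n+1) / (n+1).factorial := by ring
  -- uniform version of the estimate
  have hD' : ∀ b : ℝ, 0 ≤ b → ∀ n, ∀ r ∈ Set.Icc (0:ℝ) b,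
      |W (n+1) r - W n r| ≤ (b^2/lam) * ((b^2/lam)^n / n.factorial) := by
    intro b hb n r hr
    have hfn : (0:ℝ) < n.factorial := by exact_mod_cast n.factorial_pos
    refine (hD b hb n r hr).trans ?_
    have h1 : (b/lam)^n * r^n ≤ (b^2/lam)^n := by
      rw [← mul_pow]
      apply pow_le_pow_left₀ (mul_nonneg (by positivity) hr.1)
      calc b/lam * r ≤ b/lam * b := mul_le_mul_of_nonneg_left hr.2 (by positivity)
        _ = b^2/lam := by ring
    calc (b^2/lam) * (b/lam)^n * r^n / n.factorial
        = (b^2/lam) * ((b/lam)^n * r^n) / n.factorial := by ring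
      _ ≤ (b^2/lam) * (b^2/lam)^n / n.factorial := by
          apply div_mono' _ hfn
          exact mul_le_mul_of_nonneg_left h1 (by positivity)
      _ = (b^2/lam) * ((b^2/lam)^n / n.factorial) := by ring
  set d : ℝ → ℕ → ℝ := fun b n => (b^2/lam) * ((b^2/lam)^n / n.factorial) with hddef
  have hd0 : ∀ (b : ℝ) (n : ℕ), 0 ≤ d b n := by
    intro b n
    have hfn : (0:ℝ) < n.factorial := by exact_mod_cast n.factorial_pos
    rw [hddef]; positivity
  have hdsum : ∀ b, Summable (d b) :=
    fun b => (Real.summable_pow_div_factorial (b^2/lam)).mul_left _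
  have hdist0 : ∀ b, 0 ≤ b → ∀ r ∈ Set.Icc (0:ℝ) b, ∀ n,
      dist (W n r) (W (n+1) r) ≤ d b n := by
    intro b hb r hr n
    rw [Real.dist_eq, abs_sub_comm]
    exact hD' b hb n r hr
  have hcauchy : ∀ r, CauchySeq (fun n => W n r) := by
    intro r
    rcases le_or_gt r 0 with h | h
    · apply cauchySeq_of_dist_le_of_summable (d := fun _ => (0:ℝ)) _ summable_zero
      intro n
      rw [hW1 n r h, hW1 (n+1) r h]
      simp
    · exact cauchySeq_of_dist_le_of_summable _ (hdist0 r h.le r ⟨h.le, le_rfl⟩) (hdsum r)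
  have hex2 : ∀ r, ∃ L, Tendsto (fun n => W n r) atTop (𝓝 L) :=
    fun r => cauchySeq_tendsto_of_complete (hcauchy r)
  set Wi : ℝ → ℝ := fun r => (hex2 r).choose with hWidef
  have hWi : ∀ r, Tendsto (fun n => W n r) atTop (𝓝 (Wi r)) := fun r => (hex2 r).choose_spec
  have hWineg : ∀ r ≤ (0:ℝ), Wi r = 1 := by
    intro r hr
    have h1 : (fun n => W n r) = fun _ => (1:ℝ) := funext fun n => hW1 n r hr
    have h2 := hWi r
    rw [h1] at h2
    exact tendsto_nhds_unique h2 tendsto_const_nhds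
  set tail : ℝ → ℕ → ℝ := fun b n => ∑' m, d b (n + m) with htaildef
  have htailnn : ∀ b n, 0 ≤ tail b n := fun b n => tsum_nonneg fun m => hd0 b _
  have htail : ∀ b, 0 ≤ b → ∀ r ∈ Set.Icc (0:ℝ) b, ∀ n, |W n r - Wi r| ≤ tail b n := by
    intro b hb r hr n
    have h1 := dist_le_tsum_of_dist_le_of_tendsto (d b) (hdist0 b hb r hr) (hdsum b) (hWi r) n
    rw [Real.dist_eq] at h1
    exact h1
  have htail0 : ∀ b, 0 ≤ b → Tendsto (tail b) atTop (𝓝 0) := by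
    intro b hb
    set x := b^2/lam with hxdef
    have hx : 0 ≤ x := by positivity
    set Ex := ∑' (m : ℕ), x^m / m.factorial with hExdef
    have hbound : ∀ n, tail b n ≤ (x * Ex) * (x^n / n.factorial) := by
      intro n
      have hfn : (0:ℝ) < n.factorial := by exact_mod_cast n.factorial_pos
      have h1 : ∀ m, d b (n + m) ≤ (x * (x^n/n.factorial)) * (x^m/m.factorial) := by
        intro m
        have hfm : (0:ℝ) < m.factorial := by exact_mod_cast m.factorial_pos
        have hfnm : ((n.factorial * m.factorial : ℕ) : ℝ) ≤ ((n+m).factorial : ℝ) := by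
          exact_mod_cast Nat.le_of_dvd (n+m).factorial_pos
            (Nat.factorial_mul_factorial_dvd_factorial_add n m)
        push_cast at hfnm
        have h2 : x^(n+m) / (((n+m).factorial) : ℝ) ≤ x^(n+m) / ((n.factorial : ℝ) * m.factorial) := by
          apply div_le_div_of_nonneg_left (by positivity) (by positivity) hfnm
        calc d b (n+m) = x * (x^(n+m)/(((n+m).factorial):ℝ)) := rfl
          _ ≤ x * (x^(n+m)/((n.factorial:ℝ) * m.factorial)) := mul_le_mul_of_nonneg_left h2 hx
          _ = (x * (x^n/n.factorial)) * (x^m/m.factorial) := by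
              rw [pow_add]
              field_simp
      have hsum1 : Summable (fun m => d b (n + m)) :=
        (hdsum b).comp_injective (add_right_injective n)
      have hsum2 : Summable (fun m : ℕ => (x * (x^n/n.factorial)) * (x^m/m.factorial)) :=
        (Real.summable_pow_div_factorial x).mul_left _
      calc tail b n ≤ ∑' m, (x * (x^n/n.factorial)) * (x^m/m.factorial) :=
            Summable.tsum_le_tsum h1 hsum1 hsum2
        _ = (x * (x^n/n.factorial)) * Ex := tsum_mul_left
        _ = (x * Ex) * (x^n/n.factorial) := by ring
    have hterm : Tendsto (fun n => (x * Ex) * (x^n / n.factorial)) atTop (𝓝 0) := by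
      have h3 := (FloorSemiring.tendsto_pow_div_factorial_atTop x).const_mul (x * Ex)
      simpa using h3
    exact squeeze_zero (fun n => htailnn b n) hbound hterm
  -- continuity of the limit
  have hWic : Continuous Wi := by
    rw [continuous_iff_continuousAt]
    intro t₀
    set b := |t₀| + 1 with hbdef
    have hb : 0 ≤ b := by positivity
    have hmem : Set.Icc (-b) b ∈ 𝓝 t₀ :=
      Icc_mem_nhds (by rw [hbdef]; linarith [neg_abs_le t₀]) (by rw [hbdef]; linarith [le_abs_self t₀])
    have huni : TendstoUniformlyOn (fun n t => W n t) Wi atTop (Set.Icc (-b) b) := by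
      rw [Metric.tendstoUniformlyOn_iff]
      intro ε hε
      filter_upwards [(htail0 b hb).eventually (gt_mem_nhds hε)] with n hn x hx
      rcases le_or_gt x 0 with h | h
      · rw [Real.dist_eq, hWineg x h, hW1 n x h]
        simpa using hε
      · have h1 := htail b hb x ⟨h.le, hx.2⟩ n
        rw [Real.dist_eq, abs_sub_comm]
        exact lt_of_le_of_lt h1 hn
    exact ((huni.continuousOn (Frequently.of_forall fun n => (hWc n).continuousOn)).continuousAt hmem)
  -- the fixed point equation
  set ps : ℝ → ℝ := pfun N lam Lam Wi with hpsdef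
  have hpss : InnerSol N lam Lam Wi ps := pfun_spec hN hlam hlL hWic
  have hfix : ∀ r, Wi r = 1 + ∫ s in (0:ℝ)..r, ps s := by
    intro r
    rcases le_or_gt r 0 with h | h
    · rw [hWineg r h, hint_zero ps hpss.2.1 r h, add_zero]
    · have hb : (0:ℝ) ≤ r := h.le
      have hkey : ∀ n, |W (n+1) r - (1 + ∫ s in (0:ℝ)..r, ps s)| ≤ r * r / lam * tail r n := by
        intro n
        have e1 : W (n+1) r - (1 + ∫ s in (0:ℝ)..r, ps s) = ∫ s in (0:ℝ)..r, (P n s - ps s) := by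
          rw [congrFun (hWsucc n) r]
          show 1 + _ - (1 + _) = _
          rw [intervalIntegral.integral_sub ((hPs n).1.intervalIntegrable _ _)
            (hpss.1.intervalIntegrable _ _)]
          ring
        have e2 : ∀ s ∈ Set.Icc (0:ℝ) r, |P n s - ps s| ≤ r * tail r n / lam := by
          intro s hs
          have h3 := inner_lip hN hlam hlL (hWc n) hWic (hPs n) hpss s hs.1
          refine h3.trans (div_mono' ?_ hlam)
          have h4 : ∀ u ∈ Set.Icc (0:ℝ) s, |W n u - Wi u| ≤ tail r n :=
            fun u hu => htail r hb u ⟨hu.1, hu.2.trans hs.2⟩ n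
          calc (∫ u in (0:ℝ)..s, |W n u - Wi u|) ≤ ∫ u in (0:ℝ)..s, tail r n :=
                intervalIntegral.integral_mono_on hs.1
                  ((((hWc n).sub hWic).abs).intervalIntegrable _ _) intervalIntegrable_const h4
            _ = tail r n * s := by
                rw [intervalIntegral.integral_const, smul_eq_mul, sub_zero, mul_comm]
            _ ≤ r * tail r n := by nlinarith [htailnn r n, hs.2]
        rw [e1]
        refine (intervalIntegral.abs_integral_le_integral_abs hb).trans ?_
        calc (∫ s in (0:ℝ)..r, |P n s - ps s|) ≤ ∫ s in (0:ℝ)..r, (r * tail r n / lam) :=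
              intervalIntegral.integral_mono_on hb
                ((((hPs n).1.sub hpss.1).abs).intervalIntegrable _ _) intervalIntegrable_const e2
          _ = (r * tail r n / lam) * r := by
              rw [intervalIntegral.integral_const, smul_eq_mul, sub_zero, mul_comm]
          _ = r * r / lam * tail r n := by ring
      have h5 : Tendsto (fun n => W (n+1) r) atTop (𝓝 (1 + ∫ s in (0:ℝ)..r, ps s)) := by
        rw [tendsto_iff_dist_tendsto_zero]
        apply squeeze_zero (fun n => dist_nonneg) (g := fun n => r * r / lam * tail r n)
          (fun n => by rw [Real.dist_eq]; exact hkey n)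
        have h6 := (htail0 r hb).const_mul (r * r / lam)
        simpa using h6
      have h7 : Tendsto (fun n => W (n+1) r) atTop (𝓝 (Wi r)) :=
        (hWi r).comp (tendsto_add_atTop_nat 1)
      exact tendsto_nhds_unique h7 h5
  -- Wi is the desired solution
  have hWD : ∀ r, HasDerivAt Wi (ps r) r := by
    intro r
    have h1 : Wi = fun u => 1 + ∫ s in (0:ℝ)..u, ps s := funext hfix
    rw [h1]
    exact (hasDerivAt_primitive_of_continuous hpss.1 0 r).const_add 1
  refine ⟨Wi, ?_, ?_, ?_, ?_, ?_⟩
  · -- C¹ on Ici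
    have h1 : ContDiffOn ℝ (0+1) Wi (Set.Ici 0) := by
      rw [contDiffOn_succ_iff_derivWithin (uniqueDiffOn_Ici 0)]
      refine ⟨fun r _ => (hWD r).differentiableAt.differentiableWithinAt, ?_, ?_⟩
      · intro h; exact absurd h (by simp)
      · rw [contDiffOn_zero]
        apply ContinuousOn.congr (hpss.1.continuousOn)
        intro r hr
        exact ((hWD r).hasDerivWithinAt).derivWithin ((uniqueDiffOn_Ici 0) r hr)
    simpa using h1
  · -- C² on Ioi
    have hps1 : ContDiffOn ℝ (0+1) ps (Set.Ioi 0) := by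
      rw [contDiffOn_succ_iff_derivWithin (uniqueDiffOn_Ioi 0)]
      refine ⟨fun r hr => (hpss.2.2.1 r hr).differentiableAt.differentiableWithinAt, ?_, ?_⟩
      · intro h; exact absurd h (by simp)
      · rw [contDiffOn_zero]
        apply ContinuousOn.congr
          (Ffun_continuousOn hWic hpss.1.continuousOn (fun x hx => ne_of_gt hx))
        intro r hr
        exact ((hpss.2.2.1 r hr).hasDerivWithinAt).derivWithin ((uniqueDiffOn_Ioi 0) r hr)
    have h1 : ContDiffOn ℝ (1+1) Wi (Set.Ioi 0) := by
      rw [contDiffOn_succ_iff_derivWithin (uniqueDiffOn_Ioi 0)]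
      refine ⟨fun r _ => (hWD r).differentiableAt.differentiableWithinAt, ?_, ?_⟩
      · intro h; exact absurd h (by simp)
      · apply ContDiffOn.congr (show ContDiffOn ℝ 1 ps (Set.Ioi 0) by simpa using hps1)
        intro r hr
        exact ((hWD r).hasDerivWithinAt).derivWithin ((uniqueDiffOn_Ioi 0) r hr)
    rwa [one_add_one_eq_two] at h1
  · rw [hfix 0]; simp
  · have h1 : derivWithin Wi (Set.Ici 0) 0 = ps 0 :=
      ((hWD 0).hasDerivWithinAt).derivWithin ((uniqueDiffOn_Ici 0) 0 Set.self_mem_Ici)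
    rw [h1]
    exact hpss.2.1 0 le_rfl
  · intro r hr
    have h1 : deriv Wi = ps := funext fun x => (hWD x).deriv
    rw [h1, (hpss.2.2.1 r hr).deriv]
    rfl

end outer

section uniq

open Filter Topology

variable {N : ℕ} {lam Lam : ℝ}

/-- Extract the inner-solution-like properties from a solution of the IVP. -/
lemma sol_props (hN : 1 ≤ N) (hlam : 0 < lam) (hlL : lam ≤ Lam) {w : ℝ → ℝ}
    (hw : RadialIVPSol N lam Lam w) :
    ContinuousOn (derivWithin w (Set.Ici 0)) (Set.Ici 0) ∧
    (∀ r, 0 < r → HasDerivAt (derivWithin w (Set.Ici 0))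
      (Ffun N lam Lam w r (derivWithin w (Set.Ici 0) r)) r) ∧
    (∀ r, 0 ≤ r → w r = 1 + ∫ s in (0:ℝ)..r, derivWithin w (Set.Ici 0) s) := by
  obtain ⟨hC1, hC2, hw0, hd0, heq⟩ := hw
  set pw : ℝ → ℝ := derivWithin w (Set.Ici 0) with hpwdef
  have h1 : ContDiffOn ℝ (0+1) w (Set.Ici 0) := by simpa using hC1
  rw [contDiffOn_succ_iff_derivWithin (uniqueDiffOn_Ici 0)] at h1
  have hpc : ContinuousOn pw (Set.Ici 0) := by
    have := h1.2.2
    rwa [contDiffOn_zero] at this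
  have hpw_eq : ∀ r, 0 < r → pw r = deriv w r := by
    intro r hr
    exact derivWithin_of_mem_nhds (Ici_mem_nhds hr)
  have hwd : ∀ r, 0 < r → HasDerivAt w (pw r) r := by
    intro r hr
    have h2 : DifferentiableAt ℝ w r :=
      (h1.1 r (le_of_lt hr)).differentiableAt (Ici_mem_nhds hr)
    rw [hpw_eq r hr]
    exact h2.hasDerivAt
  -- second derivative
  have h3 : ContDiffOn ℝ (1+1) w (Set.Ioi 0) := by rw [one_add_one_eq_two]; exact hC2
  rw [contDiffOn_succ_iff_derivWithin (uniqueDiffOn_Ioi 0)] at h3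
  have h4 : DifferentiableOn ℝ (derivWithin w (Set.Ioi 0)) (Set.Ioi 0) :=
    h3.2.2.differentiableOn one_ne_zero
  have hpd : ∀ r, 0 < r → HasDerivAt pw (Ffun N lam Lam w r (pw r)) r := by
    intro r hr
    have h5 : DifferentiableAt ℝ (derivWithin w (Set.Ioi 0)) r :=
      (h4 r hr).differentiableAt (Ioi_mem_nhds hr)
    have h6 : derivWithin w (Set.Ioi 0) =ᶠ[𝓝 r] deriv w := by
      filter_upwards [Ioi_mem_nhds hr] with x hx
      exact derivWithin_of_mem_nhds (Ioi_mem_nhds hx)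
    have h7 : DifferentiableAt ℝ (deriv w) r := by
      rw [← h6.differentiableAt_iff]
      exact h5
    have h8 : HasDerivAt (deriv w) (deriv (deriv w) r) r := h7.hasDerivAt
    have h9 : pw =ᶠ[𝓝 r] deriv w := by
      filter_upwards [Ioi_mem_nhds hr] with x hx
      exact hpw_eq x hx
    have h10 : HasDerivAt pw (deriv (deriv w) r) r := h8.congr_of_eventuallyEq h9
    have h11 : deriv (deriv w) r = Ffun N lam Lam w r (pw r) := by
      rw [heq r hr, hpw_eq r hr]
      rfl
    rwa [h11] at h10
  refine ⟨hpc, hpd, ?_⟩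
  intro r hr
  have h12 : (∫ s in (0:ℝ)..r, pw s) = w r - w 0 := by
    apply intervalIntegral.integral_eq_sub_of_hasDeriv_right_of_le hr
      (hC1.continuousOn.mono (Set.Icc_subset_Ici_self))
    · intro x hx
      exact (hwd x hx.1).hasDerivWithinAt
    · apply ContinuousOn.intervalIntegrable
      apply hpc.mono
      rw [Set.uIcc_of_le hr]
      exact Set.Icc_subset_Ici_self
  rw [h12, hw0]
  ring

set_option maxHeartbeats 1000000 in
lemma ivp_unique (hN : 1 ≤ N) (hlam : 0 < lam) (hlL : lam ≤ Lam) {w v : ℝ → ℝ}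
    (hw : RadialIVPSol N lam Lam w) (hv : RadialIVPSol N lam Lam v) :
    ∀ r ∈ Set.Ici (0:ℝ), w r = v r := by
  obtain ⟨hwc, hwd, hwint⟩ := sol_props hN hlam hlL hw
  obtain ⟨hvc, hvd, hvint⟩ := sol_props hN hlam hlL hv
  set pw : ℝ → ℝ := derivWithin w (Set.Ici 0) with hpwdef
  set pv : ℝ → ℝ := derivWithin v (Set.Ici 0) with hpvdef
  have hwcont : ContinuousOn w (Set.Ici 0) := hw.1.continuousOn
  have hvcont : ContinuousOn v (Set.Ici 0) := hv.1.continuousOn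
  have hw0 : pw 0 = 0 := hw.2.2.2.1
  have hv0 : pv 0 = 0 := hv.2.2.2.1
  -- globally continuous difference
  set G : ℝ → ℝ := fun s => |w (max s 0) - v (max s 0)| / lam with hGdef
  have hmax : Continuous (fun s : ℝ => max s 0) := continuous_id.max continuous_const
  have hmax' : ∀ s : ℝ, max s 0 ∈ Set.Ici (0:ℝ) := fun s => Set.mem_Ici.2 (le_max_right _ _)
  have hGc : Continuous G := by
    apply Continuous.div_const
    apply Continuous.abs
    exact ((hwcont.sub hvcont).comp_continuous hmax hmax')
  have hG0 : ∀ s, 0 ≤ G s := fun s => by rw [hGdef]; positivity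
  have hGeq : ∀ s, 0 ≤ s → G s = |w s - v s| / lam := by
    intro s hs
    rw [hGdef]
    simp only [max_eq_left hs]
  -- key estimate on the derivative difference
  have hq : ∀ b, 0 ≤ b → ∀ r ∈ Set.Icc (0:ℝ) b,
      |pw r - pv r| ≤ (∫ s in (0:ℝ)..r, |w s - v s|) / lam := by
    intro b hb r hr
    have key := sign_abs_le (q := fun t => pw t - pv t) (g := G) (a := 0) (b := b)
      ((hwc.sub hvc).mono Set.Icc_subset_Ici_self)
      (by show pw 0 - pv 0 = 0; rw [hw0, hv0]; ring)
      hGc hG0 ?_ r hr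
    · refine key.trans (le_of_eq ?_)
      rw [← intervalIntegral.integral_div]
      apply intervalIntegral.integral_congr
      intro s hs
      rw [Set.uIcc_of_le hr.1] at hs
      exact hGeq s hs.1
    · intro s hs
      refine ⟨Ffun N lam Lam w s (pw s) - Ffun N lam Lam v s (pv s),
        (hwd s hs.1).sub (hvd s hs.1), fun hpos => ?_, fun hneg => ?_⟩
      · rw [hGeq s hs.1.le]
        exact Ffun_sub_le hN hlam hlL hs.1 (by linarith)
      · rw [hGeq s hs.1.le]
        have h3 := Ffun_sub_le (w₁ := v) (w₂ := w) hN hlam hlL hs.1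
          (q := pw s) (p := pv s) (by linarith)
        rw [abs_sub_comm] at h3
        linarith
  -- the difference of the integral equations
  have hu : ∀ r, 0 ≤ r → w r - v r = ∫ s in (0:ℝ)..r, (pw s - pv s) := by
    intro r hr
    rw [hwint r hr, hvint r hr,
      intervalIntegral.integral_sub
        ((hwc.mono (by rw [Set.uIcc_of_le hr]; exact Set.Icc_subset_Ici_self)).intervalIntegrable)
        ((hvc.mono (by rw [Set.uIcc_of_le hr]; exact Set.Icc_subset_Ici_self)).intervalIntegrable)]
    ring
  -- Gronwall iteration
  intro r hr
  have hb : (0:ℝ) ≤ r := hr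
  obtain ⟨B, hB⟩ := isCompact_Icc.exists_bound_of_continuousOn
    (s := Set.Icc (0:ℝ) r) ((hwcont.sub hvcont).mono Set.Icc_subset_Ici_self)
  have hB' : ∀ t ∈ Set.Icc (0:ℝ) r, |w t - v t| ≤ B := by
    intro t ht
    rw [← Real.norm_eq_abs]
    exact hB t ht
  have hB0 : 0 ≤ B := le_trans (abs_nonneg _) (hB' 0 ⟨le_rfl, hb⟩)
  have hucont : ContinuousOn (fun t => w t - v t) (Set.Icc (0:ℝ) r) :=
    (hwcont.sub hvcont).mono Set.Icc_subset_Ici_self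
  have hqcont : ContinuousOn (fun t => pw t - pv t) (Set.Icc (0:ℝ) r) :=
    (hwc.sub hvc).mono Set.Icc_subset_Ici_self
  have hmain : ∀ n : ℕ, ∀ t ∈ Set.Icc (0:ℝ) r,
      |w t - v t| ≤ B * (r/lam)^n * t^n / n.factorial := by
    intro n
    induction n with
    | zero =>
      intro t ht
      simpa using hB' t ht
    | succ n ih =>
      intro t ht
      have hfn : (0:ℝ) < n.factorial := by exact_mod_cast n.factorial_pos
      have hfs : ((n+1).factorial : ℝ) = ((n:ℝ)+1) * n.factorial := by
        rw [Nat.factorial_succ]; push_cast; ring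
      -- bound on the q-difference
      have h2 : ∀ s ∈ Set.Icc (0:ℝ) t,
          |pw s - pv s| ≤ B * (r/lam)^(n+1) * s^n / (n+1).factorial := by
        intro s hs
        have hsr : s ≤ r := hs.2.trans ht.2
        have h3 := hq r hb s ⟨hs.1, hsr⟩
        have h4 : (∫ u in (0:ℝ)..s, |w u - v u|) ≤
            ∫ u in (0:ℝ)..s, B * (r/lam)^n / n.factorial * u^n := by
          apply intervalIntegral.integral_mono_on hs.1
            ((hucont.mono (Set.Icc_subset_Icc le_rfl hsr)).abs.intervalIntegrable_of_Icc hs.1)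
            ((continuous_const.mul (continuous_pow n)).intervalIntegrable _ _)
          intro u hu
          calc |w u - v u| ≤ B * (r/lam)^n * u^n / n.factorial := ih u ⟨hu.1, hu.2.trans hsr⟩
            _ = B * (r/lam)^n / n.factorial * u^n := by ring
        have h5 : (∫ u in (0:ℝ)..s, B * (r/lam)^n / n.factorial * u^n) =
            B * (r/lam)^n / n.factorial * (s^(n+1)/((n:ℝ)+1)) := by
          rw [intervalIntegral.integral_const_mul, integral_pow,
            zero_pow (Nat.succ_ne_zero n), sub_zero]
        have h6 : s^(n+1) ≤ r * s^n := by
          rw [pow_succ]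
          calc s^n * s ≤ s^n * r := mul_le_mul_of_nonneg_left hsr (pow_nonneg hs.1 n)
            _ = r * s^n := by ring
        have h7 : (∫ u in (0:ℝ)..s, |w u - v u|) ≤
            B * (r/lam)^n / n.factorial * (r * s^n /((n:ℝ)+1)) := by
          refine h4.trans ?_
          rw [h5]
          apply mul_le_mul_of_nonneg_left _ (by positivity)
          exact div_mono' h6 (by positivity)
        refine h3.trans ((div_mono' h7 hlam).trans_eq ?_)
        have hn1 : ((n:ℝ)+1) ≠ 0 := by positivity
        rw [hfs, pow_succ]
        field_simp
      -- integrate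
      have h8 : |w t - v t| ≤
          ∫ s in (0:ℝ)..t, B * (r/lam)^(n+1) / (n+1).factorial * s^n := by
        rw [hu t ht.1]
        refine (intervalIntegral.abs_integral_le_integral_abs ht.1).trans ?_
        apply intervalIntegral.integral_mono_on ht.1
          (((hqcont.mono (Set.Icc_subset_Icc le_rfl ht.2)).abs).intervalIntegrable_of_Icc ht.1)
          ((continuous_const.mul (continuous_pow n)).intervalIntegrable _ _)
        intro s hs
        calc |pw s - pv s| ≤ B * (r/lam)^(n+1) * s^n / (n+1).factorial := h2 s hs
          _ = B * (r/lam)^(n+1) / (n+1).factorial * s^n := by ring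
      have h9 : (∫ s in (0:ℝ)..t, B * (r/lam)^(n+1) / (n+1).factorial * s^n) =
          B * (r/lam)^(n+1) / (n+1).factorial * (t^(n+1)/((n:ℝ)+1)) := by
        rw [intervalIntegral.integral_const_mul, integral_pow,
          zero_pow (Nat.succ_ne_zero n), sub_zero]
      refine h8.trans ?_
      rw [h9]
      have hfacpos1 : (0:ℝ) < (n+1).factorial := by exact_mod_cast (n+1).factorial_pos
      have h10 : t^(n+1)/((n:ℝ)+1) ≤ t^(n+1) := by
        apply div_le_self (pow_nonneg ht.1 _)
        linarith [Nat.cast_nonneg (α := ℝ) n]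
      calc B * (r/lam)^(n+1) / (n+1).factorial * (t^(n+1)/((n:ℝ)+1))
          ≤ B * (r/lam)^(n+1) / (n+1).factorial * t^(n+1) := by
            apply mul_le_mul_of_nonneg_left h10 (by positivity)
        _ = B * (r/lam)^(n+1) * t^(n+1) / (n+1).factorial := by ring
  -- conclude
  have hfinal : ∀ n : ℕ, |w r - v r| ≤ B * ((r*r/lam)^n / n.factorial) := by
    intro n
    have hfn : (0:ℝ) < n.factorial := by exact_mod_cast n.factorial_pos
    refine (hmain n r ⟨hb, le_rfl⟩).trans ?_
    have h1 : (r/lam)^n * r^n ≤ (r*r/lam)^n := by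
      rw [← mul_pow]
      apply pow_le_pow_left₀ (mul_nonneg (by positivity) hb)
      apply le_of_eq; ring
    calc B * (r/lam)^n * r^n / n.factorial = B * ((r/lam)^n * r^n) / n.factorial := by ring
      _ ≤ B * (r*r/lam)^n / n.factorial := by
          apply div_mono' _ hfn
          exact mul_le_mul_of_nonneg_left h1 hB0
      _ = B * ((r*r/lam)^n / n.factorial) := by ring
  have hlim : Tendsto (fun n : ℕ => B * ((r*r/lam)^n / n.factorial)) atTop (𝓝 0) := by
    have h1 := (FloorSemiring.tendsto_pow_div_factorial_atTop (r*r/lam)).const_mul B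
    simpa using h1
  have h2 : |w r - v r| ≤ 0 := ge_of_tendsto hlim (Eventually.of_forall hfinal)
  have h3 : |w r - v r| = 0 := le_antisymm h2 (abs_nonneg _)
  have h4 := abs_eq_zero.1 h3
  linarith

end uniq

/-- global existence and uniqueness (on `[0,∞)`) of the solution of
the radial initial value problem `w'' = M(-((N-1)/r) m(w') - w)`, `w(0)=1`, `w'(0)=0`. -/
theorem stmt_13 (N : ℕ) (hN : 1 ≤ N) (lam Lam : ℝ) (hlam : 0 < lam) (hlL : lam ≤ Lam) :
    (∃ w : ℝ → ℝ, RadialIVPSol N lam Lam w) ∧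
    ∀ w v : ℝ → ℝ, RadialIVPSol N lam Lam w → RadialIVPSol N lam Lam v →
      ∀ r ∈ Set.Ici (0:ℝ), w r = v r := by
  exact ⟨exists_ivp hN hlam hlL, fun w v hw hv => ivp_unique hN hlam hlL hw hv⟩
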